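/- Let A and B be normed complex vector spaces, let f : A → B be a mapping, and let ε : A → [0,∞) be a function such that ‖3f(a/3) − f(a)‖ ≤ ε(a) for all a ∈ A. Then for every positive integer n and every a ∈ A one has ‖3^{−n} f(3^n a) − f(a)‖ ≤ Σ_{i=1}^{n} 3^{−i} ε(3^i a). -/

import Mathlib

/-- Iterated estimate: `‖3⁻ⁿ f(3ⁿ a) − f(a)‖ ≤ Σ_{i=1}^{n} 3⁻ⁱ ε(3ⁱ a)`. -/
theorem stmt_14
    {A B : Type*} [NormedAddCommGroup A] [NormedSpace ℂ A]
    [NormedAddCommGroup B] [NormedSpace ℂ B]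
    (f : A → B) (ε : A → ℝ) (hε : ∀ a : A, 0 ≤ ε a)
    (h : ∀ a : A, ‖(3:ℂ) • f ((3:ℂ)⁻¹ • a) - f a‖ ≤ ε a) :
    ∀ n : ℕ, 0 < n → ∀ a : A,
      ‖((3:ℂ)^n)⁻¹ • f ((3:ℂ)^n • a) - f a‖ ≤
        ∑ i ∈ Finset.Icc 1 n, ((3:ℝ)^i)⁻¹ * ε ((3:ℂ)^i • a) := by
  have h3 : ((3:ℂ)) ≠ 0 := by norm_num
  have hn3 : ‖(3:ℂ)‖ = 3 := by
    simp
  have key : ∀ x : A, ‖(3:ℂ)⁻¹ • f ((3:ℂ) • x) - f x‖ ≤ 3⁻¹ * ε ((3:ℂ) • x) := by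
    intro x
    have hx := h ((3:ℂ) • x)
    rw [inv_smul_smul₀ h3] at hx
    have e : (3:ℂ)⁻¹ • f ((3:ℂ) • x) - f x
        = -((3:ℂ)⁻¹ • ((3:ℂ) • f x - f ((3:ℂ) • x))) := by
      rw [smul_sub, smul_smul, inv_mul_cancel₀ h3, one_smul, neg_sub]
    rw [e, norm_neg, norm_smul, norm_inv, hn3]
    gcongr
  have main : ∀ n : ℕ, ∀ a : A,
      ‖((3:ℂ)^n)⁻¹ • f ((3:ℂ)^n • a) - f a‖ ≤
        ∑ i ∈ Finset.Icc 1 n, ((3:ℝ)^i)⁻¹ * ε ((3:ℂ)^i • a) := by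
    intro n
    induction n with
    | zero => intro a; simp
    | succ n ih =>
      intro a
      have split : ((3:ℂ)^(n+1))⁻¹ • f ((3:ℂ)^(n+1) • a) - f a
          = (((3:ℂ)^n)⁻¹ • ((3:ℂ)⁻¹ • f ((3:ℂ) • ((3:ℂ)^n • a)) - f ((3:ℂ)^n • a)))
            + (((3:ℂ)^n)⁻¹ • f ((3:ℂ)^n • a) - f a) := by
        rw [smul_sub, smul_smul, smul_smul, ← mul_inv, ← pow_succ]
        rw [mul_comm ((3:ℂ)) ((3:ℂ)^n), ← pow_succ]
        abel
      rw [split]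
      calc ‖_ + _‖ ≤ ‖((3:ℂ)^n)⁻¹ • ((3:ℂ)⁻¹ • f ((3:ℂ) • ((3:ℂ)^n • a)) - f ((3:ℂ)^n • a))‖
            + ‖((3:ℂ)^n)⁻¹ • f ((3:ℂ)^n • a) - f a‖ := norm_add_le _ _
        _ ≤ ((3:ℝ)^n)⁻¹ * (3⁻¹ * ε ((3:ℂ) • ((3:ℂ)^n • a)))
            + ∑ i ∈ Finset.Icc 1 n, ((3:ℝ)^i)⁻¹ * ε ((3:ℂ)^i • a) := by
          gcongr
          · rw [norm_smul, norm_inv, norm_pow, hn3]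
            gcongr
            exact key _
          · exact ih a
        _ = ∑ i ∈ Finset.Icc 1 (n+1), ((3:ℝ)^i)⁻¹ * ε ((3:ℂ)^i • a) := by
          rw [Finset.sum_Icc_succ_top (by omega : 1 ≤ n + 1)]
          rw [smul_smul, mul_comm ((3:ℂ)) ((3:ℂ)^n), ← pow_succ]
          ring
  intro n _ a
  exact main n a
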